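/- Let A : X → Y be a bounded operator between Banach spaces, 1 < p < ∞, G ⊆ B_Y with closed convex hull of G equal to B_Y, and C, σ > 0. If for every y ∈ G and every weakly null net (x_λ) in σB_X one has limsup_λ ‖y + Ax_λ‖ ≤ 1 + Cσ^p, then ρ(σ, A) ≤ Cσ^p, where ρ(σ, A) = sup{ limsup_λ ‖y + Ax_λ‖ − 1 : y ∈ B_Y, (x_λ) ⊆ σB_X weakly null }. -/

import Mathlib

open Filter
open scoped Classical

/-- A net in `X`: a function to `X` from a nonempty directed preorder. -/
structure Net (X : Type*) where
  ι : Type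
  pre : Preorder ι
  dir : IsDirected ι fun a b => pre.le a b
  ne : Nonempty ι
  toFun : ι → X

/-- The `atTop` filter of the index set of a net, along which limits are taken. -/
def Net.F {X : Type*} (N : Net X) : Filter N.ι := @Filter.atTop _ N.pre

variable {X Y : Type*} [NormedAddCommGroup X] [NormedSpace ℝ X]
  [NormedAddCommGroup Y] [NormedSpace ℝ Y]

/-- A net in a normed space is weakly null if it converges to `0` in the weak topology,
i.e. `f (x_λ) → 0` for every continuous linear functional `f`. -/
def WeaklyNullNet (N : Net X) : Prop :=
  ∀ f : X →L[ℝ] ℝ, Tendsto (fun i => f (N.toFun i)) N.F (nhds 0)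

/-- The net takes values in the ball of radius `σ`. -/
def NetInBall (N : Net X) (σ : ℝ) : Prop := ∀ i, ‖N.toFun i‖ ≤ σ

/-- The modulus of asymptotic uniform smoothness of an operator `A : X → Y`:
`ρ(σ, A) = sup { limsup_λ ‖y + A x_λ‖ - 1 }` over `y ∈ B_Y` and weakly null nets
`(x_λ) ⊆ σ B_X`, with `ρ(σ, A) = 0` for the zero operator. -/
noncomputable def rho (A : X →L[ℝ] Y) (σ : ℝ) : ℝ :=
  if A = 0 then 0 else
    sSup {r : ℝ | ∃ (N : Net X) (y : Y), ‖y‖ ≤ 1 ∧ NetInBall N σ ∧ WeaklyNullNet N ∧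
      r = Filter.limsup (fun i => ‖y + A (N.toFun i)‖) N.F - 1}

/-- `limsup (a * fᵢ) ≤ a * limsup fᵢ` for `a ≥ 0` and bounded nonnegative `f`. -/
lemma limsup_nonneg_mul_le {ι : Type*} {F : Filter ι} [F.NeBot] (f : ι → ℝ) (a : ℝ)
    (ha : 0 ≤ a) (h0 : ∀ i, 0 ≤ f i) (h1 : ∃ b, ∀ i, f i ≤ b) :
    Filter.limsup (fun i => a * f i) F ≤ a * Filter.limsup f F := by
  rcases ha.eq_or_lt with rfl | ha'
  · simp [limsup_const]
  · have bdd : F.IsBoundedUnder (· ≤ ·) f := isBoundedUnder_of ⟨h1.choose, h1.choose_spec⟩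
    have cobdd : F.IsCoboundedUnder (· ≤ ·) f :=
      IsBoundedUnder.isCoboundedUnder_le (isBoundedUnder_of ⟨0, h0⟩)
    exact le_of_eq (Monotone.map_limsSup_of_continuousAt (F := F.map f)
      (f := fun x : ℝ => a * x) (fun _ _ h => mul_le_mul_of_nonneg_left h ha)
      (continuous_mul_left a).continuousAt bdd cobdd).symm

/-- If `G ⊆ B_Y` has closed convex hull equal to `B_Y` and for every `y ∈ G` and every
weakly null net `(x_λ) ⊆ σ B_X` one has `limsup_λ ‖y + A x_λ‖ ≤ 1 + C σ^p`, then
`ρ(σ, A) ≤ C σ^p`. -/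
theorem rho_le_of_generating [CompleteSpace X] [CompleteSpace Y]
    (A : X →L[ℝ] Y) (p : ℝ) (hp : 1 < p) (G : Set Y)
    (hG₁ : G ⊆ Metric.closedBall (0 : Y) 1)
    (hG₂ : closure (convexHull ℝ G) = Metric.closedBall (0 : Y) 1)
    (C σ : ℝ) (hC : 0 < C) (hσ : 0 < σ)
    (h : ∀ y ∈ G, ∀ N : Net X, NetInBall N σ → WeaklyNullNet N →
      Filter.limsup (fun i => ‖y + A (N.toFun i)‖) N.F ≤ 1 + C * σ ^ p) :
    rho A σ ≤ C * σ ^ p := by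
  have hB : 0 < C * σ ^ p := by positivity
  rw [rho]
  split_ifs with hA
  · exact hB.le
  -- main bound: for every `y` with `‖y‖ ≤ 1` and every admissible net, limsup ≤ 1 + Cσ^p
  have key : ∀ (N : Net X), NetInBall N σ → WeaklyNullNet N → ∀ y : Y, ‖y‖ ≤ 1 →
      Filter.limsup (fun i => ‖y + A (N.toFun i)‖) N.F ≤ 1 + C * σ ^ p := by
    intro N hball hnull y hy
    letI : Preorder N.ι := N.pre
    haveI : N.F.NeBot := Filter.atTop_neBot_iff.mpr ⟨N.ne, N.dir⟩
    -- generic boundedness facts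
    have hb : ∀ z : Y, ∀ i, ‖z + A (N.toFun i)‖ ≤ ‖z‖ + ‖A‖ * σ := by
      intro z i
      refine (norm_add_le _ _).trans (add_le_add_right ?_ _)
      exact (A.le_opNorm _).trans (mul_le_mul_of_nonneg_left (hball i) (norm_nonneg A))
    have hbdd : ∀ z : Y, N.F.IsBoundedUnder (· ≤ ·)
        (fun i => ‖z + A (N.toFun i)‖) := fun z =>
      isBoundedUnder_of ⟨‖z‖ + ‖A‖ * σ, hb z⟩
    have hcob : ∀ z : Y, N.F.IsCoboundedUnder (· ≤ ·)
        (fun i => ‖z + A (N.toFun i)‖) := fun z =>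
      IsBoundedUnder.isCoboundedUnder_le (isBoundedUnder_of ⟨0, fun i => norm_nonneg _⟩)
    -- the set of good centers is convex and contains G
    set S : Set Y := {z : Y |
      Filter.limsup (fun i => ‖z + A (N.toFun i)‖) N.F ≤ 1 + C * σ ^ p} with hS
    have hGS : G ⊆ S := fun z hz => h z hz N hball hnull
    have hconv : Convex ℝ S := by
      intro z₁ hz₁ z₂ hz₂ a b ha hb' hab
      have hpt : ∀ i, ‖a • z₁ + b • z₂ + A (N.toFun i)‖ ≤
          a * ‖z₁ + A (N.toFun i)‖ + b * ‖z₂ + A (N.toFun i)‖ := by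
        intro i
        have heq : a • z₁ + b • z₂ + A (N.toFun i) =
            a • (z₁ + A (N.toFun i)) + b • (z₂ + A (N.toFun i)) := by
          rw [smul_add, smul_add]
          have : a • A (N.toFun i) + b • A (N.toFun i) = A (N.toFun i) := by
            rw [← add_smul, hab, one_smul]
          abel_nf
          rw [← add_smul, hab, one_smul]
        rw [heq]
        calc ‖a • (z₁ + A (N.toFun i)) + b • (z₂ + A (N.toFun i))‖
            ≤ ‖a • (z₁ + A (N.toFun i))‖ + ‖b • (z₂ + A (N.toFun i))‖ := norm_add_le _ _
          _ = a * ‖z₁ + A (N.toFun i)‖ + b * ‖z₂ + A (N.toFun i)‖ := by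
              rw [norm_smul, norm_smul, Real.norm_eq_abs, Real.norm_eq_abs,
                abs_of_nonneg ha, abs_of_nonneg hb']
      have step1 : Filter.limsup (fun i => ‖a • z₁ + b • z₂ + A (N.toFun i)‖) N.F ≤
          Filter.limsup (fun i =>
            a * ‖z₁ + A (N.toFun i)‖ + b * ‖z₂ + A (N.toFun i)‖) N.F := by
        refine limsup_le_limsup (Eventually.of_forall hpt) (hcob _) ?_
        refine isBoundedUnder_of ⟨a * (‖z₁‖ + ‖A‖ * σ) + b * (‖z₂‖ + ‖A‖ * σ), fun i => ?_⟩
        exact add_le_add (mul_le_mul_of_nonneg_left (hb _ _) ha)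
          (mul_le_mul_of_nonneg_left (hb _ _) hb')
      have step2 : Filter.limsup (fun i =>
            a * ‖z₁ + A (N.toFun i)‖ + b * ‖z₂ + A (N.toFun i)‖) N.F ≤
          Filter.limsup (fun i => a * ‖z₁ + A (N.toFun i)‖) N.F +
          Filter.limsup (fun i => b * ‖z₂ + A (N.toFun i)‖) N.F := by
        refine limsup_add_le ?_ ?_ ?_ ?_
        · exact isBoundedUnder_of ⟨0, fun i => mul_nonneg ha (norm_nonneg _)⟩
        · exact isBoundedUnder_of ⟨a * (‖z₁‖ + ‖A‖ * σ),
            fun i => mul_le_mul_of_nonneg_left (hb _ _) ha⟩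
        · exact IsBoundedUnder.isCoboundedUnder_le
            (isBoundedUnder_of ⟨0, fun i => mul_nonneg hb' (norm_nonneg _)⟩)
        · exact isBoundedUnder_of ⟨b * (‖z₂‖ + ‖A‖ * σ),
            fun i => mul_le_mul_of_nonneg_left (hb _ _) hb'⟩
      have step3 : Filter.limsup (fun i => a * ‖z₁ + A (N.toFun i)‖) N.F ≤
          a * (1 + C * σ ^ p) := by
        refine le_trans (limsup_nonneg_mul_le _ a ha (fun i => norm_nonneg _)
          ⟨‖z₁‖ + ‖A‖ * σ, hb z₁⟩) ?_
        exact mul_le_mul_of_nonneg_left hz₁ ha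
      have step4 : Filter.limsup (fun i => b * ‖z₂ + A (N.toFun i)‖) N.F ≤
          b * (1 + C * σ ^ p) := by
        refine le_trans (limsup_nonneg_mul_le _ b hb' (fun i => norm_nonneg _)
          ⟨‖z₂‖ + ‖A‖ * σ, hb z₂⟩) ?_
        exact mul_le_mul_of_nonneg_left hz₂ hb'
      have : Filter.limsup (fun i => ‖a • z₁ + b • z₂ + A (N.toFun i)‖) N.F ≤
          a * (1 + C * σ ^ p) + b * (1 + C * σ ^ p) :=
        step1.trans (step2.trans (add_le_add step3 step4))
      simpa [hS, ← add_mul, hab] using this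
    have hhull : convexHull ℝ G ⊆ S := convexHull_min hGS hconv
    -- approximate `y` by elements of the convex hull
    refine le_of_forall_pos_le_add fun ε hε => ?_
    have hy' : y ∈ closure (convexHull ℝ G) := by
      rw [hG₂]; exact Metric.mem_closedBall.mpr (by simpa using hy)
    obtain ⟨z, hz, hdz⟩ := Metric.mem_closure_iff.mp hy' ε hε
    have hzy : ‖y - z‖ < ε := by rwa [← dist_eq_norm]
    have step1 : Filter.limsup (fun i => ‖y + A (N.toFun i)‖) N.F ≤
        Filter.limsup (fun i => ‖y - z‖ + ‖z + A (N.toFun i)‖) N.F := by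
      refine limsup_le_limsup (Eventually.of_forall fun i => ?_) (hcob y)
        (isBoundedUnder_of ⟨‖y - z‖ + (‖z‖ + ‖A‖ * σ),
          fun i => add_le_add_right (hb z i) _⟩)
      calc ‖y + A (N.toFun i)‖ = ‖(y - z) + (z + A (N.toFun i))‖ := by abel_nf
        _ ≤ ‖y - z‖ + ‖z + A (N.toFun i)‖ := norm_add_le _ _
    have step2 : Filter.limsup (fun i => ‖y - z‖ + ‖z + A (N.toFun i)‖) N.F =
        ‖y - z‖ + Filter.limsup (fun i => ‖z + A (N.toFun i)‖) N.F :=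
      limsup_const_add N.F _ _ (hbdd z) (hcob z)
    calc Filter.limsup (fun i => ‖y + A (N.toFun i)‖) N.F
        ≤ ‖y - z‖ + Filter.limsup (fun i => ‖z + A (N.toFun i)‖) N.F := by
          rw [← step2]; exact step1
      _ ≤ ε + (1 + C * σ ^ p) := add_le_add hzy.le (hhull hz)
      _ = 1 + C * σ ^ p + ε := by ring
  refine Real.sSup_le ?_ hB.le
  rintro r ⟨N, y, hy, hball, hnull, rfl⟩
  have := key N hball hnull y hy
  linarith
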